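/- For positive constants w, η, κ, ν with ν ≥ 2, the function g(x) = (w/η)·U(x) + κ·x^ν is strictly convex on (F/T, ∞), and attains a unique minimizer on any nonempty closed interval [a, b] ⊆ (F/T, ∞). -/

import Mathlib

open Set Real

theorem stmt_5 (σ2 h B D T F w η κ ν : ℝ) (hσ : 0 < σ2) (hh : 0 < h) (hB : 0 < B)
    (hD : 0 < D) (hT : 0 < T) (hF : 0 < F)
    (hw : 0 < w) (hη : 0 < η) (hκ : 0 < κ) (hν : 2 ≤ ν)
    (U g : ℝ → ℝ)
    (hU : ∀ x : ℝ, U x =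
      (σ2 / h) * (Real.exp ((Real.log 2 / B) * (D * x) / (T * x - F)) - 1))
    (hg : ∀ x : ℝ, g x = (w / η) * U x + κ * x ^ ν) :
    StrictConvexOn ℝ (Set.Ioi (F / T)) g ∧
    ∀ a b : ℝ, F / T < a → a ≤ b →
      ∃! x : ℝ, x ∈ Set.Icc a b ∧ ∀ y ∈ Set.Icc a b, g x ≤ g y := by
  have hFT : 0 < F / T := div_pos hF hT
  set s : Set ℝ := Set.Ioi (F / T) with hs
  have hspos : ∀ x ∈ s, 0 < x := fun x hx => lt_trans hFT hx
  have hden : ∀ x ∈ s, 0 < T * x - F := by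
    intro x hx
    have hx' : F / T < x := hx
    have := (div_lt_iff₀ hT).mp hx'
    nlinarith
  set c : ℝ := Real.log 2 / B with hc
  have hcpos : 0 < c := div_pos (Real.log_pos one_lt_two) hB
  set A : ℝ := w / η * (σ2 / h) with hA
  have hApos : 0 < A := mul_pos (div_pos hw hη) (div_pos hσ hh)
  set φ : ℝ → ℝ := fun x => c * (D * x) / (T * x - F) with hφ
  -- rewrite g in a convenient form
  have hgeq : g = fun x => κ * x ^ ν + (A * Real.exp (φ x) + (-A)) := by
    funext x
    rw [hg, hU]
    ring
  -- convexity of x ↦ (T x - F)⁻¹ on s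
  have h1 : ConvexOn ℝ s (fun x => (T * x - F)⁻¹) := by
    have hbase : ConvexOn ℝ (Set.Ioi (0:ℝ)) (fun x : ℝ => x ^ (-1 : ℤ)) :=
      (strictConvexOn_zpow (by decide) (by decide)).convexOn
    have hcomp := hbase.comp_affineMap (AffineMap.lineMap (-F : ℝ) (T - F))
    have hsub : s ⊆ (AffineMap.lineMap (-F : ℝ) (T - F)) ⁻¹' Set.Ioi (0:ℝ) := by
      intro x hx
      have := hden x hx
      simp only [Set.mem_preimage, AffineMap.lineMap_apply, Set.mem_Ioi]
      simp only [vsub_eq_sub, vadd_eq_add, smul_eq_mul]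
      nlinarith
    have := hcomp.subset hsub (convex_Ioi _)
    refine this.congr (fun x _ => ?_)
    simp only [Function.comp_apply, AffineMap.lineMap_apply, vsub_eq_sub, vadd_eq_add,
      smul_eq_mul, zpow_neg, zpow_one]
    ring_nf
  -- convexity of φ on s
  have hφconv : ConvexOn ℝ s φ := by
    have h2 : ConvexOn ℝ s (fun x => (c * D * F / T) * (T * x - F)⁻¹ + c * D / T) := by
      have := (h1.smul (c := c * D * F / T)
        (by positivity)).add_const (c * D / T)
      refine this.congr (fun x _ => ?_)
      simp [smul_eq_mul]
    refine ⟨h2.1, fun x hx y hy a b ha hb hab => ?_⟩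
    have hxs : x ∈ s := hx
    have hys : y ∈ s := hy
    have hzs : a • x + b • y ∈ s := h2.1 hx hy ha hb hab
    have key : ∀ z ∈ s, φ z = (c * D * F / T) * (T * z - F)⁻¹ + c * D / T := by
      intro z hz
      have hz' := (hden z hz).ne'
      rw [hφ]
      have hinv : (T * z - F) * (T * z - F)⁻¹ = 1 := mul_inv_cancel₀ hz'
      have hT' : T * T⁻¹ = 1 := mul_inv_cancel₀ hT.ne'
      show c * (D * z) / (T * z - F) = _
      linear_combination (c * D * T⁻¹) * hinv - (c * D * (T * z - F)⁻¹ * z) * hT'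
    rw [key _ hzs, key _ hxs, key _ hys]
    have := h2.2 hx hy ha hb hab
    simpa using this
  -- convexity of exp ∘ φ on s
  have hexpφ : ConvexOn ℝ s (fun x => Real.exp (φ x)) := by
    refine ⟨convex_Ioi _, fun x hx y hy a b ha hb hab => ?_⟩
    have step1 : Real.exp (φ (a • x + b • y)) ≤ Real.exp (a * φ x + b * φ y) := by
      apply Real.exp_le_exp.2
      simpa [smul_eq_mul] using hφconv.2 hx hy ha hb hab
    have step2 : Real.exp (a * φ x + b * φ y) ≤ a * Real.exp (φ x) + b * Real.exp (φ y) := by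
      have := convexOn_exp.2 (Set.mem_univ (φ x)) (Set.mem_univ (φ y)) ha hb hab
      simpa [smul_eq_mul] using this
    simpa [smul_eq_mul] using step1.trans step2
  -- the convex (non-strict) part
  have hconvpart : ConvexOn ℝ s (fun x => A * Real.exp (φ x) + (-A)) := by
    have := (hexpφ.smul hApos.le).add_const (-A)
    refine this.congr (fun x _ => ?_)
    simp [smul_eq_mul]
  -- strict convexity of κ x^ν on s
  have hpow : StrictConvexOn ℝ s (fun x => κ * x ^ ν) := by
    have hbase : StrictConvexOn ℝ (Set.Ici (0:ℝ)) (fun x : ℝ => x ^ ν) :=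
      strictConvexOn_rpow (lt_of_lt_of_le one_lt_two hν)
    have hsub : s ⊆ Set.Ici (0:ℝ) := fun x hx => (hspos x hx).le
    have hres : StrictConvexOn ℝ s (fun x : ℝ => x ^ ν) :=
      hbase.subset hsub (convex_Ioi _)
    refine ⟨hres.1, fun x hx y hy hxy a b ha hb hab => ?_⟩
    have := hres.2 hx hy hxy ha hb hab
    have h' := mul_lt_mul_of_pos_left this hκ
    simp only [smul_eq_mul] at *
    nlinarith
  -- strict convexity of g
  have hgconv : StrictConvexOn ℝ s g := by
    rw [hgeq]
    exact hpow.add_convexOn hconvpart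
  refine ⟨hgconv, ?_⟩
  intro a b haFT hab
  have hsub : Set.Icc a b ⊆ s := fun x hx => lt_of_lt_of_le haFT hx.1
  -- continuity of g on Icc a b
  have hcont : ContinuousOn g (Set.Icc a b) := by
    rw [hgeq]
    apply ContinuousOn.add
    · apply ContinuousOn.mul continuousOn_const
      intro x hx
      exact (Real.continuousAt_rpow_const x ν
        (Or.inl (hspos x (hsub hx)).ne')).continuousWithinAt
    · apply ContinuousOn.add _ continuousOn_const
      apply ContinuousOn.mul continuousOn_const
      apply Real.continuous_exp.comp_continuousOn
      apply ContinuousOn.div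
      · fun_prop
      · fun_prop
      · intro x hx
        exact (hden x (hsub hx)).ne'
  obtain ⟨x, hxmem, hxmin⟩ :=
    isCompact_Icc.exists_isMinOn (Set.nonempty_Icc.2 hab) hcont
  have hgc : StrictConvexOn ℝ (Set.Icc a b) g := hgconv.subset hsub (convex_Icc a b)
  refine ⟨x, ⟨hxmem, fun y hy => hxmin hy⟩, ?_⟩
  rintro y ⟨hymem, hymin⟩
  exact hgc.eq_of_isMinOn (isMinOn_iff.2 hymin) hxmin hymem hxmem
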